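/- arXiv:2311.04100 — 4 statements merged into one kernel-verified Lean document; each statement's English description precedes it below -/
import Mathlib

section
/- Let x, y ∈ F be (encodings of) feasible schedules of an FJSP instance whose makespans satisfy max(C(x), C(y)) < n_T/2. Then there exist a natural number k and transpositions τ_1, …, τ_k ∈ S_N such that (τ_k ∘ ⋯ ∘ τ_1)(x) = y and, for every 1 ≤ l ≤ k, the intermediate bit string (τ_l ∘ ⋯ ∘ τ_1)(x) lies in F. -/
/-- An instance of the flexible job-shop problem (FJSP): `nJ` jobs, `nM` machines,
`nT` time slots; job `j` has `p j` operations; `allowed j o` is the set of machines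
operation `O_{j,o}` may run on; `d j o m` is the duration of operation `O_{j,o}` on
machine `M_m`. -/
structure FJSP where
  nJ : ℕ
  nM : ℕ
  nT : ℕ
  p : Fin nJ → ℕ
  allowed : (j : Fin nJ) → Fin (p j) → Finset (Fin nM)
  d : (j : Fin nJ) → Fin (p j) → Fin nM → ℕ

namespace FJSP

variable (P : FJSP)

/-- An operation `O_{j,o}` is a pair of a job index and an operation index. -/
abbrev Op := (j : Fin P.nJ) × Fin (P.p j)

/-- An assignment `(O_{j,o}, M_m, T_t)`. -/
abbrev Assignment := P.Op × Fin P.nM × Fin P.nT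

/-- A schedule: a (finite) set of assignments. -/
abbrev Schedule := Finset P.Assignment

/-- The (1-indexed) time value of the time slot `T_t`. -/
def timeVal (t : Fin P.nT) : ℕ := t.val + 1

/-- The duration of an assignment. -/
def dur (a : P.Assignment) : ℕ := P.d a.1.1 a.1.2 a.2.1

/-- Feasibility of a schedule: the assignment constraint (every operation occurs in
exactly one assignment, on an allowed machine), the order constraint, and the machine
constraint. -/
def Feasible (S : P.Schedule) : Prop :=
  (∀ op : P.Op, ∃! mt : Fin P.nM × Fin P.nT, (op, mt.1, mt.2) ∈ S) ∧
  (∀ a ∈ S, a.2.1 ∈ P.allowed a.1.1 a.1.2) ∧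
  (∀ (j : Fin P.nJ) (o o' : Fin (P.p j)) (m m' : Fin P.nM) (t t' : Fin P.nT),
      (⟨⟨j, o⟩, m, t⟩ : P.Assignment) ∈ S → (⟨⟨j, o'⟩, m', t'⟩ : P.Assignment) ∈ S →
      o < o' → P.timeVal t + P.d j o m ≤ P.timeVal t') ∧
  (∀ (op op' : P.Op) (m : Fin P.nM) (t t' : Fin P.nT),
      (op, m, t) ∈ S → (op', m, t') ∈ S → op ≠ op' →
      ¬ (P.timeVal t ≤ P.timeVal t' ∧ P.timeVal t' < P.timeVal t + P.d op.1 op.2 m))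

/-- The makespan `C(S) = max{t + d_{j,o,m} : (O_{j,o}, M_m, T_t) ∈ S}`. -/
def makespan (S : P.Schedule) : ℕ := S.sup fun a => P.timeVal a.2.2 + P.dur a

/-- The schedule encoded by a bit string `x ∈ {0,1}^N`, with respect to a bijective
enumeration `ι` of all assignments: the set of assignments whose bit is set. -/
def decode {N : ℕ} (ι : P.Assignment ≃ Fin N) (x : Fin N → Bool) : P.Schedule :=
  Finset.univ.filter fun a => x (ι a) = true

end FJSP

/-- The action of a permutation `π ∈ S_N` on bit strings:
`π(x) = (x_{π⁻¹(1)}, …, x_{π⁻¹(N)})`. -/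
def permBits {N : ℕ} (π : Equiv.Perm (Fin N)) (x : Fin N → Bool) : Fin N → Bool :=
  fun j => x (π.symm j)

-- ===== auxiliary development =====
namespace FJSPAux
variable (P : FJSP)

def enc {N : ℕ} (ι : P.Assignment ≃ Fin N) (S : P.Schedule) : Fin N → Bool :=
  fun i => decide (ι.symm i ∈ S)

lemma decode_enc {N : ℕ} (ι : P.Assignment ≃ Fin N) (S : P.Schedule) :
    P.decode ι (enc P ι S) = S := by
  ext a; simp [FJSP.decode, enc]

lemma enc_decode {N : ℕ} (ι : P.Assignment ≃ Fin N) (x : Fin N → Bool) :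
    enc P ι (P.decode ι x) = x := by
  funext i
  simp only [FJSP.decode, enc, Finset.mem_filter, Finset.mem_univ, true_and,
    Equiv.apply_symm_apply]
  cases h : x i <;> simp [h]

lemma permBits_swap {N : ℕ} (ι : P.Assignment ≃ Fin N) (a b : P.Assignment)
    (S T : P.Schedule) (haS : a ∈ S) (hbS : b ∉ S) (haT : a ∉ T) (hbT : b ∈ T)
    (hst : ∀ c, c ≠ a → c ≠ b → (c ∈ S ↔ c ∈ T)) :
    permBits (Equiv.swap (ι a) (ι b)) (enc P ι S) = enc P ι T := by
  funext k
  simp only [permBits, Equiv.symm_swap, enc, decide_eq_decide]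
  rcases eq_or_ne k (ι a) with rfl | hka
  · simp only [Equiv.swap_apply_left, Equiv.symm_apply_apply]
    simp [hbS, haT]
  · rcases eq_or_ne k (ι b) with rfl | hkb
    · simp only [Equiv.swap_apply_right, Equiv.symm_apply_apply]
      simp [haS, hbT]
    · simp only [Equiv.swap_apply_of_ne_of_ne hka hkb, decide_eq_decide]
      have h1 : ι.symm k ≠ a := fun h => hka (by rw [← h, Equiv.apply_symm_apply])
      have h2 : ι.symm k ≠ b := fun h => hkb (by rw [← h, Equiv.apply_symm_apply])
      exact hst _ h1 h2

def shiftT (C : ℕ) (t : Fin P.nT) : Fin P.nT :=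
  ⟨min (t.val + C) (P.nT - 1), by have := t.isLt; omega⟩

def posmt (mx my : P.Op → Fin P.nM) (tx ty : P.Op → Fin P.nT) (C : ℕ)
    (op : P.Op) (s : ℕ) : Fin P.nM × Fin P.nT :=
  if s = 0 then (mx op, tx op) else if s = 1 then (mx op, shiftT P C (tx op))
  else (my op, ty op)

def Sg (mx my : P.Op → Fin P.nM) (tx ty : P.Op → Fin P.nT) (C : ℕ)
    (g : P.Op → ℕ) : P.Schedule :=
  Finset.univ.image fun op => (op, posmt P mx my tx ty C op (g op))

lemma mem_Sg (mx my : P.Op → Fin P.nM) (tx ty : P.Op → Fin P.nT) (C : ℕ)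
    (g : P.Op → ℕ) (op : P.Op) (mt : Fin P.nM × Fin P.nT) :
    ((op, mt) ∈ Sg P mx my tx ty C g) ↔ mt = posmt P mx my tx ty C op (g op) := by
  simp only [Sg, Finset.mem_image, Finset.mem_univ, true_and]
  constructor
  · rintro ⟨op', h⟩
    rw [Prod.mk.injEq] at h
    obtain ⟨h1, h2⟩ := h
    subst h1
    exact h2.symm
  · intro h; exact ⟨op, by rw [h]⟩

def GPair (s s' : ℕ) : Prop := s' = 1 ∨ s = s'

def Good (g : P.Op → ℕ) : Prop :=
  (∀ op, g op ≤ 2) ∧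
  (∀ (j : Fin P.nJ) (o o' : Fin (P.p j)), o < o' → GPair (g ⟨j, o⟩) (g ⟨j, o'⟩)) ∧
  (∀ op op' : P.Op, g op = 0 → g op' ≠ 2)

end FJSPAux

open FJSPAux

/-- Transposition connectivity: if `x, y` encode feasible schedules whose makespans
satisfy `max(C(x), C(y)) < n_T / 2`, then there is a finite sequence of transpositions
`τ_1, …, τ_k` with `(τ_k ∘ ⋯ ∘ τ_1)(x) = y` such that every intermediate bit string
`(τ_l ∘ ⋯ ∘ τ_1)(x)` encodes a feasible schedule. -/
theorem stmt0 (P : FJSP) {N : ℕ} (ι : P.Assignment ≃ Fin N) (x y : Fin N → Bool)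
    (hx : P.Feasible (P.decode ι x)) (hy : P.Feasible (P.decode ι y))
    (hC : 2 * max (P.makespan (P.decode ι x)) (P.makespan (P.decode ι y)) < P.nT) :
    ∃ L : List (Equiv.Perm (Fin N)),
      (∀ τ ∈ L, τ.IsSwap) ∧
      L.foldl (fun s τ => permBits τ s) x = y ∧
      ∀ L₁, L₁ <+: L → P.Feasible (P.decode ι (L₁.foldl (fun s τ => permBits τ s) x)) := by
  classical
  obtain ⟨hx1, hx2, hx3, hx4⟩ := hx
  obtain ⟨hy1, hy2, hy3, hy4⟩ := hy
  choose mtx hmtx using fun op => (hx1 op).exists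
  choose mty hmty using fun op => (hy1 op).exists
  set Sx := P.decode ι x with hSxdef
  set Sy := P.decode ι y with hSydef
  set mx : P.Op → Fin P.nM := fun op => (mtx op).1 with hmxdef
  set tx : P.Op → Fin P.nT := fun op => (mtx op).2 with htxdef
  set my : P.Op → Fin P.nM := fun op => (mty op).1 with hmydef
  set ty : P.Op → Fin P.nT := fun op => (mty op).2 with htydef
  set C := max (P.makespan Sx) (P.makespan Sy) with hCdef
  have hmemx : ∀ op : P.Op, ((op, mx op, tx op) : P.Assignment) ∈ Sx := fun op => hmtx op
  have hmemy : ∀ op : P.Op, ((op, my op, ty op) : P.Assignment) ∈ Sy := fun op => hmty op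
  have hux : ∀ (op : P.Op) (mt : Fin P.nM × Fin P.nT),
      (op, mt.1, mt.2) ∈ Sx → mt = (mx op, tx op) := fun op mt h => (hx1 op).unique h (hmemx op)
  have huy : ∀ (op : P.Op) (mt : Fin P.nM × Fin P.nT),
      (op, mt.1, mt.2) ∈ Sy → mt = (my op, ty op) := fun op mt h => (hy1 op).unique h (hmemy op)
  have hlex : ∀ op : P.Op, (tx op).val + 1 + P.d op.1 op.2 (mx op) ≤ C := by
    intro op
    have h : P.timeVal (tx op) + P.dur (op, mx op, tx op) ≤ P.makespan Sx :=
      Finset.le_sup (f := fun a : P.Assignment => P.timeVal a.2.2 + P.dur a) (hmemx op)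
    simp only [FJSP.timeVal, FJSP.dur] at h
    exact le_trans h (le_max_left _ _)
  have hley : ∀ op : P.Op, (ty op).val + 1 + P.d op.1 op.2 (my op) ≤ C := by
    intro op
    have h : P.timeVal (ty op) + P.dur (op, my op, ty op) ≤ P.makespan Sy :=
      Finset.le_sup (f := fun a : P.Assignment => P.timeVal a.2.2 + P.dur a) (hmemy op)
    simp only [FJSP.timeVal, FJSP.dur] at h
    exact le_trans h (le_max_right _ _)
  have hordx : ∀ (j : Fin P.nJ) (o o' : Fin (P.p j)), o < o' →
      (tx ⟨j, o⟩).val + 1 + P.d j o (mx ⟨j, o⟩) ≤ (tx ⟨j, o'⟩).val + 1 := by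
    intro j o o' h
    have := hx3 j o o' (mx ⟨j, o⟩) (mx ⟨j, o'⟩) (tx ⟨j, o⟩) (tx ⟨j, o'⟩)
      (hmemx ⟨j, o⟩) (hmemx ⟨j, o'⟩) h
    simpa [FJSP.timeVal] using this
  have hordy : ∀ (j : Fin P.nJ) (o o' : Fin (P.p j)), o < o' →
      (ty ⟨j, o⟩).val + 1 + P.d j o (my ⟨j, o⟩) ≤ (ty ⟨j, o'⟩).val + 1 := by
    intro j o o' h
    have := hy3 j o o' (my ⟨j, o⟩) (my ⟨j, o'⟩) (ty ⟨j, o⟩) (ty ⟨j, o'⟩)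
      (hmemy ⟨j, o⟩) (hmemy ⟨j, o'⟩) h
    simpa [FJSP.timeVal] using this
  have hmacx : ∀ op op' : P.Op, op ≠ op' → mx op = mx op' →
      ¬((tx op).val + 1 ≤ (tx op').val + 1 ∧
        (tx op').val + 1 < (tx op).val + 1 + P.d op.1 op.2 (mx op)) := by
    intro op op' hne hm
    have h2 : ((op', mx op, tx op') : P.Assignment) ∈ Sx := by rw [hm]; exact hmemx op'
    have := hx4 op op' (mx op) (tx op) (tx op') (hmemx op) h2 hne
    simpa [FJSP.timeVal] using this
  have hmacy : ∀ op op' : P.Op, op ≠ op' → my op = my op' →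
      ¬((ty op).val + 1 ≤ (ty op').val + 1 ∧
        (ty op').val + 1 < (ty op).val + 1 + P.d op.1 op.2 (my op)) := by
    intro op op' hne hm
    have h2 : ((op', my op, ty op') : P.Assignment) ∈ Sy := by rw [hm]; exact hmemy op'
    have := hy4 op op' (my op) (ty op) (ty op') (hmemy op) h2 hne
    simpa [FJSP.timeVal] using this
  have halx : ∀ op : P.Op, mx op ∈ P.allowed op.1 op.2 := fun op => hx2 _ (hmemx op)
  have haly : ∀ op : P.Op, my op ∈ P.allowed op.1 op.2 := fun op => hy2 _ (hmemy op)
  have hshiftx : ∀ op : P.Op, (shiftT P C (tx op)).val = (tx op).val + C := by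
    intro op
    have h1 := hlex op
    simp only [shiftT]
    omega
  have p0 : ∀ op : P.Op, posmt P mx my tx ty C op 0 = (mx op, tx op) := fun _ => rfl
  have p1 : ∀ op : P.Op, posmt P mx my tx ty C op 1 = (mx op, shiftT P C (tx op)) := fun _ => rfl
  have p2 : ∀ op : P.Op, posmt P mx my tx ty C op 2 = (my op, ty op) := fun _ => rfl
  have feas : ∀ g : P.Op → ℕ, Good P g → P.Feasible (Sg P mx my tx ty C g) := by
    intro g hg
    obtain ⟨hg1, hg2, hg3⟩ := hg
    refine ⟨?_, ?_, ?_, ?_⟩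
    · intro op
      exact ⟨posmt P mx my tx ty C op (g op),
        (mem_Sg P mx my tx ty C g op _).mpr rfl,
        fun mt hmt => (mem_Sg P mx my tx ty C g op mt).mp hmt⟩
    · rintro ⟨op, m, t⟩ hmem
      have h := (mem_Sg P mx my tx ty C g op (m, t)).mp hmem
      have hs := hg1 op
      show m ∈ P.allowed op.1 op.2
      rcases (show g op = 0 ∨ g op = 1 ∨ g op = 2 by omega) with h0 | h0 | h0
      · rw [h0, p0 op, Prod.mk.injEq] at h; rw [h.1]; exact halx op
      · rw [h0, p1 op, Prod.mk.injEq] at h; rw [h.1]; exact halx op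
      · rw [h0, p2 op, Prod.mk.injEq] at h; rw [h.1]; exact haly op
    · intro j o o' m m' t t' hm1 hm2 hlt
      have h1 := (mem_Sg P mx my tx ty C g ⟨j, o⟩ (m, t)).mp hm1
      have h2 := (mem_Sg P mx my tx ty C g ⟨j, o'⟩ (m', t')).mp hm2
      have hp := hg2 j o o' hlt
      have hs1 := hg1 ⟨j, o⟩
      have hs2 := hg1 ⟨j, o'⟩
      have HX := hordx j o o' hlt
      have HY := hordy j o o' hlt
      have L3 : (ty ⟨j, o⟩).val + 1 + P.d j o (my ⟨j, o⟩) ≤ C := hley ⟨j, o⟩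
      have S1 := hshiftx ⟨j, o⟩
      have S2 := hshiftx ⟨j, o'⟩
      simp only [FJSP.timeVal]
      rcases (show g ⟨j, o⟩ = 0 ∨ g ⟨j, o⟩ = 1 ∨ g ⟨j, o⟩ = 2 by omega) with ha | ha | ha <;>
        rcases (show g ⟨j, o'⟩ = 0 ∨ g ⟨j, o'⟩ = 1 ∨ g ⟨j, o'⟩ = 2 by omega) with hb | hb | hb <;>
        rw [ha, hb] at hp <;> rw [ha] at h1 <;> rw [hb] at h2 <;>
        simp only [p0, p1, p2, Prod.mk.injEq] at h1 h2 <;>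
        obtain ⟨hm1', ht1'⟩ := h1 <;> obtain ⟨hm2', ht2'⟩ := h2 <;>
        subst ht1' <;> subst ht2' <;> subst hm1' <;>
        simp only [GPair] at hp <;>
        omega
    · intro op op' m t t' hm1 hm2 hne
      have h1 := (mem_Sg P mx my tx ty C g op (m, t)).mp hm1
      have h2 := (mem_Sg P mx my tx ty C g op' (m, t')).mp hm2
      have hs1 := hg1 op
      have hs2 := hg1 op'
      have L1 := hlex op
      have L2 := hlex op'
      have L3 := hley op
      have L4 := hley op'
      have S1 := hshiftx op
      have S2 := hshiftx op'
      simp only [FJSP.timeVal]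
      rcases (show g op = 0 ∨ g op = 1 ∨ g op = 2 by omega) with ha | ha | ha <;>
        rcases (show g op' = 0 ∨ g op' = 1 ∨ g op' = 2 by omega) with hb | hb | hb <;>
        rw [ha] at h1 <;> rw [hb] at h2 <;>
        simp only [p0, p1, p2, Prod.mk.injEq] at h1 h2 <;>
        obtain ⟨hma, hta⟩ := h1 <;> obtain ⟨hmb, htb⟩ := h2 <;>
        subst hta <;> subst htb <;> subst hma <;>
        first
          | exact absurd hb (hg3 op op' ha)
          | exact absurd ha (hg3 op' op hb)
          | ((try have MX := hmacx op op' hne hmb)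
             (try have MY := hmacy op op' hne hmb)
             omega)
  have sne : ∀ (j : Fin P.nJ) (o1 o2 : Fin (P.p j)), o1 ≠ o2 → (⟨j, o1⟩ : P.Op) ≠ ⟨j, o2⟩ := by
    intro j o1 o2 h hh
    injection hh with h1 h2
    exact h h2
  have jne : ∀ (j j0 : Fin P.nJ) (o1 : Fin (P.p j)) (o2 : Fin (P.p j0)), j ≠ j0 →
      (⟨j, o1⟩ : P.Op) ≠ ⟨j0, o2⟩ := fun j j0 o1 o2 h hh => h (congrArg Sigma.fst hh)
  have hdistinct : ∀ (op : P.Op) (s : ℕ), s ≤ 1 →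
      posmt P mx my tx ty C op s ≠ posmt P mx my tx ty C op (s + 1) := by
    intro op s hs heq
    have L1 := hlex op
    have L3 := hley op
    have S1 := hshiftx op
    rcases (show s = 0 ∨ s = 1 by omega) with rfl | rfl
    · rw [show (0 + 1 : ℕ) = 1 from rfl, p0 op, p1 op, Prod.mk.injEq] at heq
      have := congrArg Fin.val heq.2
      omega
    · rw [show (1 + 1 : ℕ) = 2 from rfl, p1 op, p2 op, Prod.mk.injEq] at heq
      have := congrArg Fin.val heq.2
      omega
  have reach : ∀ (n : ℕ) (g : P.Op → ℕ), Good P g → (∑ op : P.Op, (2 - g op)) = n →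
      ∃ L : List (Equiv.Perm (Fin N)),
        (∀ τ ∈ L, τ.IsSwap) ∧
        L.foldl (fun s τ => permBits τ s) (enc P ι (Sg P mx my tx ty C g)) =
          enc P ι (Sg P mx my tx ty C (fun _ => 2)) ∧
        ∀ L₁, L₁ <+: L →
          P.Feasible (P.decode ι (L₁.foldl (fun s τ => permBits τ s)
            (enc P ι (Sg P mx my tx ty C g)))) := by
    intro n
    induction n with
    | zero =>
      intro g hg hsum
      have hgeq : g = fun _ => 2 := by
        funext op
        have h1 := hg.1 op
        have h2 : (2 - g op) = 0 := by
          by_contra h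
          have hpos : 0 < ∑ op : P.Op, (2 - g op) :=
            Finset.sum_pos' (fun _ _ => Nat.zero_le _)
              ⟨op, Finset.mem_univ op, Nat.pos_of_ne_zero h⟩
          omega
        omega
      refine ⟨[], by simp, by simp only [List.foldl_nil, hgeq], ?_⟩
      intro L₁ hL₁
      rw [List.prefix_nil.mp hL₁]
      simp only [List.foldl_nil, decode_enc]
      exact feas g hg
    | succ n ih =>
      intro g hg hsum
      have hexists : ∃ op : P.Op, g op ≤ 1 ∧ Good P (Function.update g op (g op + 1)) := by
        obtain ⟨hg1, hg2, hg3⟩ := hg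
        by_cases hz : ∃ op : P.Op, g op = 0
        · obtain ⟨⟨j0, o0⟩, h0⟩ := hz
          have hTne : (Finset.univ.filter (fun o : Fin (P.p j0) => g ⟨j0, o⟩ = 0)).Nonempty :=
            ⟨o0, by simp [h0]⟩
          set o := Finset.max' _ hTne with hodef
          have ho : g ⟨j0, o⟩ = 0 := by
            have := Finset.max'_mem _ hTne
            simp only [Finset.mem_filter, Finset.mem_univ, true_and] at this
            exact this
          have hsucc : ∀ o' : Fin (P.p j0), o < o' → g ⟨j0, o'⟩ = 1 := by
            intro o' hlt
            have h1 : g ⟨j0, o'⟩ ≠ 0 := by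
              intro h
              have hle : o' ≤ o := Finset.le_max' _ o' (by simp [h])
              exact absurd hle (not_le.mpr hlt)
            have h2 : g ⟨j0, o'⟩ ≠ 2 := hg3 ⟨j0, o⟩ _ ho
            have := hg1 ⟨j0, o'⟩
            omega
          refine ⟨⟨j0, o⟩, by omega, ?_, ?_, ?_⟩
          · intro op'
            rcases eq_or_ne op' ⟨j0, o⟩ with rfl | hne
            · rw [Function.update_self]; omega
            · rw [Function.update_of_ne hne]; exact hg1 op'
          · intro j o1 o2 h12
            by_cases hj : j = j0
            · subst hj
              by_cases he1 : o1 = o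
              · subst he1
                rw [Function.update_self,
                  Function.update_of_ne (sne j o2 o h12.ne')]
                exact Or.inl (hsucc o2 h12)
              · by_cases he2 : o2 = o
                · subst he2
                  rw [Function.update_of_ne (sne j o1 o h12.ne),
                    Function.update_self]
                  exact Or.inl (by omega)
                · rw [Function.update_of_ne (sne j o1 o he1),
                    Function.update_of_ne (sne j o2 o he2)]
                  exact hg2 j o1 o2 h12
            · rw [Function.update_of_ne (jne j j0 o1 o hj),
                Function.update_of_ne (jne j j0 o2 o hj)]
              exact hg2 j o1 o2 h12
          · intro op1 op2 h1 h2
            rcases eq_or_ne op2 ⟨j0, o⟩ with rfl | hne2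
            · rw [Function.update_self] at h2; omega
            · rw [Function.update_of_ne hne2] at h2
              rcases eq_or_ne op1 ⟨j0, o⟩ with rfl | hne1
              · rw [Function.update_self] at h1; omega
              · rw [Function.update_of_ne hne1] at h1
                exact hg3 op1 op2 h1 h2
        · push_neg at hz
          have hone : ∃ op : P.Op, g op = 1 := by
            by_contra h
            push_neg at h
            have hzero : (∑ op : P.Op, (2 - g op)) = 0 :=
              Finset.sum_eq_zero fun op _ => by
                have := hg1 op; have := hz op; have := h op; omega
            omega
          obtain ⟨⟨j0, o0⟩, h0⟩ := hone
          have hTne : (Finset.univ.filter (fun o : Fin (P.p j0) => g ⟨j0, o⟩ = 1)).Nonempty :=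
            ⟨o0, by simp [h0]⟩
          set o := Finset.min' _ hTne with hodef
          have ho : g ⟨j0, o⟩ = 1 := by
            have := Finset.min'_mem _ hTne
            simp only [Finset.mem_filter, Finset.mem_univ, true_and] at this
            exact this
          have hpred : ∀ o' : Fin (P.p j0), o' < o → g ⟨j0, o'⟩ = 2 := by
            intro o' hlt
            have h1 : g ⟨j0, o'⟩ ≠ 1 := by
              intro h
              have hle : o ≤ o' := Finset.min'_le _ o' (by simp [h])
              exact absurd hle (not_le.mpr hlt)
            have h2 := hz ⟨j0, o'⟩
            have := hg1 ⟨j0, o'⟩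
            omega
          refine ⟨⟨j0, o⟩, by omega, ?_, ?_, ?_⟩
          · intro op'
            rcases eq_or_ne op' ⟨j0, o⟩ with rfl | hne
            · rw [Function.update_self]; omega
            · rw [Function.update_of_ne hne]; exact hg1 op'
          · intro j o1 o2 h12
            by_cases hj : j = j0
            · subst hj
              by_cases he1 : o1 = o
              · subst he1
                rw [Function.update_self,
                  Function.update_of_ne (sne j o2 o h12.ne')]
                have hb1 := hz ⟨j, o2⟩
                have hb2 := hg1 ⟨j, o2⟩
                simp only [GPair]
                omega
              · by_cases he2 : o2 = o
                · subst he2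
                  rw [Function.update_of_ne (sne j o1 o h12.ne),
                    Function.update_self]
                  have hb1 := hpred o1 h12
                  simp only [GPair]
                  omega
                · rw [Function.update_of_ne (sne j o1 o he1),
                    Function.update_of_ne (sne j o2 o he2)]
                  exact hg2 j o1 o2 h12
            · rw [Function.update_of_ne (jne j j0 o1 o hj),
                Function.update_of_ne (jne j j0 o2 o hj)]
              exact hg2 j o1 o2 h12
          · intro op1 op2 h1 h2
            exfalso
            rcases eq_or_ne op1 ⟨j0, o⟩ with rfl | hne1
            · rw [Function.update_self] at h1; omega
            · rw [Function.update_of_ne hne1] at h1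
              exact hz op1 h1
      obtain ⟨op, hle1, hgood'⟩ := hexists
      set g' := Function.update g op (g op + 1) with hg'def
      have hga : g' op = g op + 1 := Function.update_self _ _ _
      have hgb : ∀ op', op' ≠ op → g' op' = g op' := fun op' h => Function.update_of_ne h _ _
      have hsum' : (∑ op' : P.Op, (2 - g' op')) = n := by
        have e1 : (2 - g' op) + ∑ op' ∈ Finset.univ.erase op, (2 - g' op') =
            ∑ op' : P.Op, (2 - g' op') :=
          Finset.add_sum_erase Finset.univ (fun op' => 2 - g' op') (Finset.mem_univ op)
        have e2 : (2 - g op) + ∑ op' ∈ Finset.univ.erase op, (2 - g op') =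
            ∑ op' : P.Op, (2 - g op') :=
          Finset.add_sum_erase Finset.univ (fun op' => 2 - g op') (Finset.mem_univ op)
        have e3 : ∑ op' ∈ Finset.univ.erase op, (2 - g' op') =
            ∑ op' ∈ Finset.univ.erase op, (2 - g op') :=
          Finset.sum_congr rfl fun op' h => by rw [hgb op' (Finset.ne_of_mem_erase h)]
        rw [hga] at e1
        omega
      set a : P.Assignment := (op, posmt P mx my tx ty C op (g op)) with hadef
      set b : P.Assignment := (op, posmt P mx my tx ty C op (g op + 1)) with hbdef
      have hpne : posmt P mx my tx ty C op (g op) ≠ posmt P mx my tx ty C op (g op + 1) :=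
        hdistinct op (g op) hle1
      have haS : a ∈ Sg P mx my tx ty C g :=
        (mem_Sg P mx my tx ty C g op _).mpr rfl
      have hbS : b ∉ Sg P mx my tx ty C g := fun h =>
        hpne ((mem_Sg P mx my tx ty C g op _).mp h).symm
      have haT : a ∉ Sg P mx my tx ty C g' := by
        intro h
        have h2 := (mem_Sg P mx my tx ty C g' op _).mp h
        rw [hga] at h2
        exact hpne h2
      have hbT : b ∈ Sg P mx my tx ty C g' :=
        (mem_Sg P mx my tx ty C g' op _).mpr (by rw [hga])
      have hst : ∀ c : P.Assignment, c ≠ a → c ≠ b →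
          (c ∈ Sg P mx my tx ty C g ↔ c ∈ Sg P mx my tx ty C g') := by
        rintro ⟨opc, mtc⟩ hca hcb
        rcases eq_or_ne opc op with rfl | hop
        · rw [mem_Sg, mem_Sg, hga]
          constructor
          · intro h
            exact absurd (by rw [hadef, h]) hca
          · intro h
            exact absurd (by rw [hbdef, h]) hcb
        · rw [mem_Sg, mem_Sg, hgb opc hop]
      have henc := permBits_swap P ι a b _ _ haS hbS haT hbT hst
      obtain ⟨L', hsw', hfold', hpre'⟩ := ih g' hgood' hsum'
      have hane : ι a ≠ ι b := fun h => hpne (congrArg Prod.snd (ι.injective h))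
      refine ⟨Equiv.swap (ι a) (ι b) :: L', ?_, ?_, ?_⟩
      · intro τ hτ
        rcases List.mem_cons.mp hτ with rfl | h
        · exact ⟨ι a, ι b, hane, rfl⟩
        · exact hsw' τ h
      · simp only [List.foldl_cons]
        rw [henc]
        exact hfold'
      · intro L₁ hL₁
        cases L₁ with
        | nil =>
          simp only [List.foldl_nil, decode_enc]
          exact feas g hg
        | cons τ L₂ =>
          rw [List.cons_prefix_cons] at hL₁
          obtain ⟨rfl, hL₂⟩ := hL₁
          simp only [List.foldl_cons]
          rw [henc]
          exact hpre' L₂ hL₂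
  have hSg0 : Sg P mx my tx ty C (fun _ => 0) = Sx := by
    ext c
    obtain ⟨op, m, t⟩ := c
    rw [mem_Sg]
    constructor
    · intro h
      simp only [p0, Prod.mk.injEq] at h
      obtain ⟨h1, h2⟩ := h
      subst h1; subst h2
      exact hmemx op
    · intro h
      have h2 := hux op (m, t) h
      simp only [h2, p0]
  have hSg2 : Sg P mx my tx ty C (fun _ => 2) = Sy := by
    ext c
    obtain ⟨op, m, t⟩ := c
    rw [mem_Sg]
    constructor
    · intro h
      simp only [p2, Prod.mk.injEq] at h
      obtain ⟨h1, h2⟩ := h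
      subst h1; subst h2
      exact hmemy op
    · intro h
      have h2 := huy op (m, t) h
      simp only [h2, p2]
  have hgood0 : Good P (fun _ => 0) := by
    refine ⟨fun _ => by norm_num, fun j o o' _ => Or.inr rfl, fun op op' _ h2 => ?_⟩
    simp at h2
  obtain ⟨L, hsw, hfold, hpre⟩ :=
    reach (∑ op : P.Op, (2 - (fun _ : P.Op => (0 : ℕ)) op)) (fun _ => 0) hgood0 rfl
  have hx0 : enc P ι (Sg P mx my tx ty C (fun _ => 0)) = x := by
    rw [hSg0, hSxdef]
    exact enc_decode P ι x
  have hy0 : enc P ι (Sg P mx my tx ty C (fun _ => 2)) = y := by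
    rw [hSg2, hSydef]
    exact enc_decode P ι y
  refine ⟨L, hsw, ?_, ?_⟩
  · rw [← hx0, hfold, hy0]
  · intro L₁ hL₁
    have h := hpre L₁ hL₁
    rwa [hx0] at h
end

section
/- Preservation of feasibility: for every feasible bit string x ∈ F, every β ∈ ℝ, and every finite sequence of involutions π_1, …, π_n ∈ S_N, the state B(β)(|x⟩_x ⊗ |0⟩_y ⊗ |0⟩_{z_1} ⊗ ⋯ ⊗ |0⟩_{z_n} ⊗ |0⟩_c), where B(β) = B_{π_n}(β)⋯B_{π_1}(β)·A, lies in the subspace 𝓕 ⊗ H_aux, where 𝓕 = span{|w⟩ : w ∈ F} ⊆ H_x and H_aux = H_y ⊗ ℂ²_{z_1} ⊗ ⋯ ⊗ ℂ²_{z_n} ⊗ ℂ²_c. -/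
/-- Hamming weight of a bit string. -/
def hammingWeight {N : ℕ} (x : Fin N → Bool) : ℕ :=
  (Finset.univ.filter fun j => x j = true).card

/-- The control predicate `χ_π(x) = ⋀_j [¬x_j ∨ ⋀_{l ∈ nbhd(π(j))} ¬x_{π⁻¹(l)}]`. -/
def chi {N : ℕ} (G : SimpleGraph (Fin N)) [DecidableRel G.Adj] (π : Equiv.Perm (Fin N))
    (x : Fin N → Bool) : Bool :=
  decide (∀ j : Fin N, ¬ x j = true ∨ ∀ l : Fin N, G.Adj (π j) l → ¬ x (π.symm l) = true)

/-- The feasible set `F`: no two adjacent vertices are both marked, and the Hamming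
weight equals `k`. -/
def Fset {N : ℕ} (G : SimpleGraph (Fin N)) (k : ℕ) : Set (Fin N → Bool) :=
  {x | (∀ j l : Fin N, G.Adj j l → ¬ (x j = true ∧ x l = true)) ∧ hammingWeight x = k}

/-- Basis index set of `H = H_x ⊗ H_y ⊗ ℂ²_{z_1} ⊗ ⋯ ⊗ ℂ²_{z_n} ⊗ ℂ²_c`: a basis vector
`|w⟩_x|y⟩_y|z_1⟩⋯|z_n⟩|c⟩_c` corresponds to the tuple `(w, y, z, c)`. -/
abbrev MixIdx (N n : ℕ) := (Fin N → Bool) × (Fin N → Bool) × (Fin n → Bool) × Bool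

/-- The Hilbert space `H = H_x ⊗ H_y ⊗ ℂ²_{z_1} ⊗ ⋯ ⊗ ℂ²_{z_n} ⊗ ℂ²_c`. -/
abbrev Hmix (N n : ℕ) := EuclideanSpace ℂ (MixIdx N n)

/-- The linear extension of the basis map `|p⟩ ↦ |g(p)⟩`. -/
noncomputable def basisExtend {ι : Type*} [Fintype ι] [DecidableEq ι] (g : ι → ι) :
    EuclideanSpace ℂ ι →ₗ[ℂ] EuclideanSpace ℂ ι :=
  Matrix.toEuclideanLin (Matrix.of fun q p => if g p = q then (1 : ℂ) else 0)

/-- The basis state `|x⟩`. -/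
noncomputable def ket {ι : Type*} [Fintype ι] [DecidableEq ι] (x : ι) : EuclideanSpace ℂ ι :=
  EuclideanSpace.single x 1

/-- The copy unitary `A`: on basis states, `|w⟩_x|y⟩_y ↦ |w⟩_x|y ⊕ w⟩_y` (bitwise XOR),
acting trivially on the `z` and `c` registers. -/
noncomputable def Aop (N n : ℕ) : Hmix N n →ₗ[ℂ] Hmix N n :=
  basisExtend fun p => (p.1, fun j => xor (p.2.1 j) (p.1 j), p.2.2.1, p.2.2.2)

/-- The operator `V_i`: the linear extension of the basis map sending
`|w⟩_x|y⟩_y|z⟩_{z_i}|c⟩_c ↦ |π_i(w)⟩_x|y⟩_y|1−z⟩_{z_i}|1−c⟩_c` when `χ_{π_i}(y) = 1` and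
`z_i = c`, and fixing the basis vector otherwise. -/
noncomputable def Vop {N n : ℕ} (G : SimpleGraph (Fin N)) [DecidableRel G.Adj]
    (π : Fin n → Equiv.Perm (Fin N)) (i : Fin n) : Hmix N n →ₗ[ℂ] Hmix N n :=
  basisExtend fun p =>
    if chi G (π i) p.2.1 = true ∧ p.2.2.1 i = p.2.2.2 then
      (permBits (π i) p.1, p.2.1, Function.update p.2.2.1 i (!p.2.2.1 i), !p.2.2.2)
    else p

/-- The partial graph-controlled permutation mixer `B_{π_i}(β) = cos β·𝟙 − i sin β·V_i`. -/
noncomputable def Bop {N n : ℕ} (G : SimpleGraph (Fin N)) [DecidableRel G.Adj]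
    (π : Fin n → Equiv.Perm (Fin N)) (i : Fin n) (β : ℝ) : Hmix N n →ₗ[ℂ] Hmix N n :=
  (Real.cos β : ℂ) • (1 : Module.End ℂ (Hmix N n)) -
    (Complex.I * (Real.sin β : ℂ)) • Vop G π i

/-- The mixer `B(β) = B_{π_n}(β) ⋯ B_{π_1}(β) · A`. -/
noncomputable def mixer {N n : ℕ} (G : SimpleGraph (Fin N)) [DecidableRel G.Adj]
    (π : Fin n → Equiv.Perm (Fin N)) (β : ℝ) : Hmix N n →ₗ[ℂ] Hmix N n :=
  (List.ofFn fun i : Fin n => Bop G π i β).reverse.prod * Aop N n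

lemma basisExtend_ket {ι : Type*} [Fintype ι] [DecidableEq ι] (g : ι → ι) (p : ι) :
    basisExtend g (ket p) = ket (g p) := by
  unfold basisExtend ket
  ext q
  simp [Matrix.toEuclideanLin_apply, Matrix.mulVec, dotProduct,
    EuclideanSpace.single_apply, Finset.sum_ite_eq, eq_comm]

lemma symm_eq_self {N : ℕ} (π : Equiv.Perm (Fin N)) (hπ : π ^ 2 = 1) : π.symm = π := by
  have h : ∀ a, π (π a) = a := by
    intro a
    have := congrArg (fun e : Equiv.Perm (Fin N) => e a) hπ
    simpa [pow_succ, Equiv.Perm.mul_apply] using this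
  apply Equiv.ext
  intro a
  rw [Equiv.symm_apply_eq]
  exact (h a).symm

lemma permBits_invol {N : ℕ} (π : Equiv.Perm (Fin N)) (hπ : π ^ 2 = 1) (x : Fin N → Bool) :
    permBits π (permBits π x) = x := by
  have h : ∀ a, π (π a) = a := by
    intro a
    have := congrArg (fun e : Equiv.Perm (Fin N) => e a) hπ
    simpa [pow_succ, Equiv.Perm.mul_apply] using this
  funext j
  simp [permBits, symm_eq_self π hπ, h]

lemma hammingWeight_permBits {N : ℕ} (π : Equiv.Perm (Fin N)) (x : Fin N → Bool) :
    hammingWeight (permBits π x) = hammingWeight x := by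
  unfold hammingWeight permBits
  exact Finset.card_bij' (fun j _ => π.symm j) (fun j _ => π j)
    (by intro a ha; simpa using ha) (by intro a ha; simpa using ha)
    (by intro a _; simp) (by intro a _; simp)

lemma chi_mem {N k : ℕ} (G : SimpleGraph (Fin N)) [DecidableRel G.Adj]
    (π : Equiv.Perm (Fin N)) (x : Fin N → Bool) (hx : x ∈ Fset G k)
    (hchi : chi G π x = true) : permBits π x ∈ Fset G k := by
  have hc : ∀ j : Fin N, ¬ x j = true ∨ ∀ l : Fin N, G.Adj (π j) l → ¬ x (π.symm l) = true :=
    of_decide_eq_true hchi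
  constructor
  · intro a b hab ⟨ha, hb⟩
    rcases hc (π.symm a) with h | h
    · exact h ha
    · exact h b (by simpa using hab) hb
  · rw [hammingWeight_permBits]; exact hx.2

lemma basisExtend_preserve {ι : Type*} [Fintype ι] [DecidableEq ι] (g : ι → ι)
    (P : Set ι) (hg : ∀ p ∈ P, g p ∈ P) {v : EuclideanSpace ℂ ι}
    (hv : v ∈ Submodule.span ℂ (ket '' P)) :
    basisExtend g v ∈ Submodule.span ℂ (ket '' P) := by
  have h : Submodule.map (basisExtend g) (Submodule.span ℂ (ket '' P)) ≤
      Submodule.span ℂ (ket '' P) := by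
    rw [Submodule.map_span, Submodule.span_le]
    rintro _ ⟨_, ⟨p, hp, rfl⟩, rfl⟩
    exact Submodule.subset_span ⟨g p, hg p hp, (basisExtend_ket g p).symm⟩
  exact h (Submodule.mem_map_of_mem hv)

lemma prod_preserve {V : Type*} [AddCommGroup V] [Module ℂ V] (S : Submodule ℂ V) :
    ∀ (l : List (Module.End ℂ V)), (∀ f ∈ l, ∀ v ∈ S, f v ∈ S) →
      ∀ v ∈ S, l.prod v ∈ S := by
  intro l
  induction l with
  | nil => intro _ v hv; simpa using hv
  | cons a l ih =>
    intro h v hv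
    have h2 := ih (fun f hf => h f (List.mem_cons_of_mem a hf)) v hv
    simpa [List.prod_cons, Module.End.mul_apply] using
      h a List.mem_cons_self _ h2

/-- Preservation of feasibility: for every `x ∈ F`, every `β`, and every finite sequence
of involutions `π_1, …, π_n`, the state `B(β)(|x⟩_x ⊗ |0⟩_y ⊗ |0⟩_{z_1} ⊗ ⋯ ⊗ |0⟩_{z_n} ⊗ |0⟩_c)`
lies in `𝓕 ⊗ H_aux = span{|w⟩ ⊗ |φ⟩ : w ∈ F, φ an auxiliary basis state}`. -/
theorem stmt1 {N k n : ℕ} (G : SimpleGraph (Fin N)) [DecidableRel G.Adj]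
    (π : Fin n → Equiv.Perm (Fin N)) (hπ : ∀ i, π i ^ 2 = 1)
    (x : Fin N → Bool) (hx : x ∈ Fset G k) (β : ℝ) :
    mixer G π β (ket (x, (fun _ => false), (fun _ => false), false)) ∈
      Submodule.span ℂ
        {v : Hmix N n |
          ∃ w ∈ Fset G k, ∃ (y : Fin N → Bool) (z : Fin n → Bool) (c : Bool),
            v = ket (w, y, z, c)} := by
  classical
  set P : Set (MixIdx N n) :=
    {p | p = (x, x, (fun _ => false : Fin n → Bool), false) ∨
      ∃ i : Fin n, chi G (π i) x = true ∧
        p = (permBits (π i) x, x,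
          Function.update (fun _ : Fin n => false) i true, true)} with hPdef
  have hPF : ∀ p ∈ P, p.1 ∈ Fset G k := by
    rintro p (rfl | ⟨i, hc, rfl⟩)
    · exact hx
    · exact chi_mem G (π i) x hx hc
  have hS : Submodule.span ℂ (ket '' P) ≤ Submodule.span ℂ
      {v : Hmix N n | ∃ w ∈ Fset G k, ∃ (y : Fin N → Bool) (z : Fin n → Bool) (c : Bool),
        v = ket (w, y, z, c)} := by
    apply Submodule.span_mono
    rintro _ ⟨p, hp, rfl⟩
    exact ⟨p.1, hPF p hp, p.2.1, p.2.2.1, p.2.2.2, rfl⟩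
  have hclose : ∀ i : Fin n, ∀ p ∈ P,
      (if chi G (π i) p.2.1 = true ∧ p.2.2.1 i = p.2.2.2 then
        (permBits (π i) p.1, p.2.1, Function.update p.2.2.1 i (!p.2.2.1 i), !p.2.2.2)
      else p) ∈ P := by
    rintro i p (rfl | ⟨i0, hc, rfl⟩)
    · by_cases hchi : chi G (π i) x = true
      · right
        exact ⟨i, hchi, by simp [hchi]⟩
      · left
        simp [hchi]
    · by_cases hii : i = i0
      · subst hii
        rw [if_pos ⟨hc, by simp⟩]
        left
        have hupd : Function.update (Function.update (fun _ : Fin n => false) i true)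
            i (!(Function.update (fun _ : Fin n => false) i true i)) =
            fun _ : Fin n => false := by
          funext j
          by_cases hj : j = i <;> simp [Function.update, hj]
        simp only [hupd, permBits_invol (π i) (hπ i), Bool.not_true]
      · rw [if_neg]
        · exact Or.inr ⟨i0, hc, rfl⟩
        · rintro ⟨-, h2⟩
          simp only [Function.update_of_ne hii] at h2
          exact Bool.false_ne_true h2
  have hB : ∀ i : Fin n, ∀ v ∈ Submodule.span ℂ (ket '' P),
      Bop G π i β v ∈ Submodule.span ℂ (ket '' P) := by
    intro i v hv
    have hV : Vop G π i v ∈ Submodule.span ℂ (ket '' P) :=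
      basisExtend_preserve _ P (hclose i) hv
    simp only [Bop, LinearMap.sub_apply, LinearMap.smul_apply, Module.End.one_apply]
    exact Submodule.sub_mem _ (Submodule.smul_mem _ _ hv) (Submodule.smul_mem _ _ hV)
  have hA : Aop N n (ket (x, (fun _ => false), (fun _ => false), false)) =
      ket (x, x, (fun _ : Fin n => false), false) := by
    rw [Aop, basisExtend_ket]
    simp
  refine hS ?_
  rw [mixer, Module.End.mul_apply, hA]
  refine prod_preserve _ _ ?_ _ ?_
  · intro f hf v hv
    simp only [List.mem_reverse, List.mem_ofFn] at hf
    obtain ⟨i, rfl⟩ := hf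
    exact hB i v hv
  · exact Submodule.subset_span ⟨_, Or.inl rfl, rfl⟩
end

section
/- Single-layer feasibility of the controlled fractional permutation: for every permutation π ∈ S_N, every β ∈ ℝ, and every feasible bit string x ∈ F, the state Λ_{χ_π}(U_π(β))(|x⟩ ⊗ |x⟩) lies in 𝓕 ⊗ H_N, where 𝓕 = span{|w⟩ : w ∈ F}. Explicitly, it equals (cos(β)|x⟩ − i·sin(β)|π(x)⟩) ⊗ |x⟩ with π(x) ∈ F if χ_π(x) = 1, and equals |x⟩ ⊗ |x⟩ if χ_π(x) = 0. -/
/-- The Hilbert space `H_N` with orthonormal basis `{|x⟩ : x ∈ {0,1}^N}`. -/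
abbrev HN (N : ℕ) := EuclideanSpace ℂ (Fin N → Bool)

/-- The permutation operator `U_π`, the linear extension of `U_π|x⟩ = |π(x)⟩`. -/
noncomputable def permU {N : ℕ} (π : Equiv.Perm (Fin N)) : HN N →ₗ[ℂ] HN N :=
  basisExtend (permBits π)

/-- The fractional permutation operator `U_π(β) = cos β·𝟙 − i sin β·U_π`. -/
noncomputable def permUbeta {N : ℕ} (π : Equiv.Perm (Fin N)) (β : ℝ) : HN N →ₗ[ℂ] HN N :=
  (Real.cos β : ℂ) • (1 : Module.End ℂ (HN N)) - (Complex.I * (Real.sin β : ℂ)) • permU π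

/-- The χ-controlled operator `Λ_χ(U)` on `H_N ⊗ H_N` (modelled as the Euclidean
space indexed by `{0,1}^N × {0,1}^N`). -/
noncomputable def controlled {N : ℕ} (χ : (Fin N → Bool) → Bool) (U : HN N →ₗ[ℂ] HN N) :
    EuclideanSpace ℂ ((Fin N → Bool) × (Fin N → Bool)) →ₗ[ℂ]
      EuclideanSpace ℂ ((Fin N → Bool) × (Fin N → Bool)) :=
  Matrix.toEuclideanLin <| Matrix.of fun p q =>
    if p.2 = q.2 then
      (if χ q.2 = true then Matrix.toEuclideanLin.symm U p.1 q.1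
       else if p.1 = q.1 then 1 else 0)
    else 0


lemma toEuclideanLin_ket {ι : Type*} [Fintype ι] [DecidableEq ι] (M : Matrix ι ι ℂ) (q p : ι) :
    (Matrix.toEuclideanLin M (ket q)) p = M p q := by
  have h : (EuclideanSpace.single q (1 : ℂ) : EuclideanSpace ℂ ι).ofLp = Pi.single q 1 :=
    EuclideanSpace.ofLp_single ..
  rw [ket, Matrix.toEuclideanLin_apply, h]
  simp [Matrix.mulVec_single]

lemma toEuclideanLin_one {ι : Type*} [Fintype ι] [DecidableEq ι] :
    (Matrix.toEuclideanLin (1 : Matrix ι ι ℂ)) = (1 : Module.End ℂ (EuclideanSpace ℂ ι)) := by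
  ext v p
  rw [Matrix.toEuclideanLin_apply, Matrix.one_mulVec]
  rfl

lemma ket_apply {ι : Type*} [Fintype ι] [DecidableEq ι] (x p : ι) :
    ket x p = if p = x then (1 : ℂ) else 0 :=
  EuclideanSpace.single_apply x 1 p

set_option synthInstance.maxHeartbeats 1000000 in
lemma symm_permUbeta {N : ℕ} (π : Equiv.Perm (Fin N)) (β : ℝ) (p q : Fin N → Bool) :
    Matrix.toEuclideanLin.symm (permUbeta π β) p q =
      (Real.cos β : ℂ) * (if p = q then 1 else 0) -
        Complex.I * (Real.sin β : ℂ) * (if permBits π q = p then 1 else 0) := by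
  have h1 : Matrix.toEuclideanLin.symm (1 : Module.End ℂ (HN N)) = (1 : Matrix _ _ ℂ) := by
    rw [← toEuclideanLin_one]; exact Matrix.toEuclideanLin.symm_apply_apply _
  have h2 : Matrix.toEuclideanLin.symm (permU π) =
      Matrix.of fun q p => if permBits π p = q then (1 : ℂ) else 0 :=
    Matrix.toEuclideanLin.symm_apply_apply _
  rw [permUbeta, map_sub, map_smul, map_smul, h1, h2]
  simp [Matrix.one_apply, mul_comm]

lemma permBits_mem_Fset {N k : ℕ} {G : SimpleGraph (Fin N)} [DecidableRel G.Adj]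
    {π : Equiv.Perm (Fin N)} {x : Fin N → Bool} (hx : x ∈ Fset G k)
    (hχ : chi G π x = true) : permBits π x ∈ Fset G k := by
  have hχ' := of_decide_eq_true hχ
  refine ⟨fun a b hab ⟨ha, hb⟩ => ?_, by rw [hammingWeight_permBits]; exact hx.2⟩
  rcases hχ' (π.symm a) with h | h
  · exact h ha
  · exact h b (by simpa using hab) hb

/-- Single-layer feasibility: for `x ∈ F`, the state `Λ_{χ_π}(U_π(β))(|x⟩ ⊗ |x⟩)` lies in
`𝓕 ⊗ H_N`; explicitly it equals `(cos β|x⟩ − i sin β|π(x)⟩) ⊗ |x⟩` with `π(x) ∈ F` if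
`χ_π(x) = 1`, and equals `|x⟩ ⊗ |x⟩` if `χ_π(x) = 0`. -/
theorem stmt9 {N k : ℕ} (G : SimpleGraph (Fin N)) [DecidableRel G.Adj]
    (π : Equiv.Perm (Fin N)) (β : ℝ) (x : Fin N → Bool) (hx : x ∈ Fset G k) :
    controlled (chi G π) (permUbeta π β) (ket (x, x)) ∈
        Submodule.span ℂ
          {v | ∃ w ∈ Fset G k, ∃ y : Fin N → Bool, v = ket (w, y)} ∧
      (chi G π x = true →
        permBits π x ∈ Fset G k ∧
          controlled (chi G π) (permUbeta π β) (ket (x, x)) =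
            (Real.cos β : ℂ) • ket (x, x) -
              (Complex.I * (Real.sin β : ℂ)) • ket (permBits π x, x)) ∧
      (chi G π x = false →
        controlled (chi G π) (permUbeta π β) (ket (x, x)) = ket (x, x)) := by
  classical
  set M : Matrix ((Fin N → Bool) × (Fin N → Bool)) ((Fin N → Bool) × (Fin N → Bool)) ℂ :=
    Matrix.of fun p q =>
      if p.2 = q.2 then
        (if chi G π q.2 = true then Matrix.toEuclideanLin.symm (permUbeta π β) p.1 q.1
         else if p.1 = q.1 then 1 else 0)
      else 0 with hM
  have happly : ∀ p, controlled (chi G π) (permUbeta π β) (ket (x, x)) p = M p (x, x) :=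
    fun p => toEuclideanLin_ket M (x, x) p
  by_cases hχ : chi G π x = true
  · have heq : controlled (chi G π) (permUbeta π β) (ket (x, x)) =
        (Real.cos β : ℂ) • ket (x, x) -
          (Complex.I * (Real.sin β : ℂ)) • ket (permBits π x, x) := by
      ext p
      rw [happly p]
      have : ((Real.cos β : ℂ) • ket (x, x) -
          (Complex.I * (Real.sin β : ℂ)) • ket ((permBits π x), x) :
            EuclideanSpace ℂ ((Fin N → Bool) × (Fin N → Bool))) p =
          (Real.cos β : ℂ) * ket (x, x) p -
            Complex.I * (Real.sin β : ℂ) * ket (permBits π x, x) p := rfl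
      rw [this, ket_apply, ket_apply, hM]
      simp only [Matrix.of_apply, hχ, if_true]
      by_cases h2 : p.2 = x
      · rw [if_pos h2, symm_permUbeta]
        congr 1
        · congr 1
          by_cases h1 : p.1 = x
          · rw [if_pos h1, if_pos (by rw [Prod.ext_iff]; exact ⟨h1, h2⟩)]
          · rw [if_neg h1, if_neg (fun h => h1 (congrArg Prod.fst h))]
        · congr 1
          by_cases h1 : permBits π x = p.1
          · rw [if_pos h1, if_pos (by rw [Prod.ext_iff]; exact ⟨h1.symm, h2⟩)]
          · rw [if_neg h1, if_neg (fun h => h1 (congrArg Prod.fst h).symm)]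
      · rw [if_neg h2, if_neg (fun h => h2 (congrArg Prod.snd h)),
          if_neg (fun h => h2 (congrArg Prod.snd h))]
        ring
    have hπx : permBits π x ∈ Fset G k := permBits_mem_Fset hx hχ
    refine ⟨?_, fun _ => ⟨hπx, heq⟩, fun h => by rw [hχ] at h; exact absurd h (by simp)⟩
    rw [heq]
    exact Submodule.sub_mem _
      (Submodule.smul_mem _ _ (Submodule.subset_span ⟨x, hx, x, rfl⟩))
      (Submodule.smul_mem _ _ (Submodule.subset_span ⟨permBits π x, hπx, x, rfl⟩))
  · have heq : controlled (chi G π) (permUbeta π β) (ket (x, x)) = ket (x, x) := by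
      ext p
      rw [happly p, ket_apply, hM]
      simp only [Matrix.of_apply, if_neg hχ]
      by_cases h2 : p.2 = x
      · rw [if_pos h2]
        by_cases h1 : p.1 = x
        · rw [if_pos h1, if_pos (by rw [Prod.ext_iff]; exact ⟨h1, h2⟩)]
        · rw [if_neg h1, if_neg (fun h => h1 (congrArg Prod.fst h))]
      · rw [if_neg h2, if_neg (fun h => h2 (congrArg Prod.snd h))]
    refine ⟨?_, fun h => absurd h hχ, fun _ => heq⟩
    rw [heq]
    exact Submodule.subset_span ⟨x, hx, x, rfl⟩
end

section
/- Correspondence between feasible schedules and independent sets of the constraint graph: a bit string x ∈ {0,1}^N encodes a feasible FJSP schedule (x ∈ F) if and only if (i) every marked index of x lies in V (only allowed operation–machine–time assignments are marked), (ii) the set of marked indices is an independent set of the constraint graph G = (V, E), i.e., no two marked indices are joined by an edge, and (iii) the Hamming weight |x| equals the total number of operations k = |O|. -/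
namespace FJSP

variable (P : FJSP)

/-- Conflict with the assignment constraint: two distinct assignments of the same
operation. -/
def conflictA (a a' : P.Assignment) : Prop := a ≠ a' ∧ a.1 = a'.1

/-- (One-sided) conflict with the order constraint: assignments of operations `o < o'`
of the same job with `t + d_{j,o,m} > t'`. -/
def conflictO (a a' : P.Assignment) : Prop :=
  ∃ (j : Fin P.nJ) (o o' : Fin (P.p j)) (m m' : Fin P.nM) (t t' : Fin P.nT),
    a = ⟨⟨j, o⟩, m, t⟩ ∧ a' = ⟨⟨j, o'⟩, m', t'⟩ ∧ o < o' ∧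
      P.timeVal t' < P.timeVal t + P.d j o m

/-- (One-sided) conflict with the machine constraint: assignments of distinct operations
to the same machine with `t' ∈ [t, t + d_{j,o,m})`. -/
def conflictM (a a' : P.Assignment) : Prop :=
  a.1 ≠ a'.1 ∧ a.2.1 = a'.2.1 ∧ P.timeVal a.2.2 ≤ P.timeVal a'.2.2 ∧
    P.timeVal a'.2.2 < P.timeVal a.2.2 + P.dur a

/-- Two assignments are in conflict (i.e. joined by an edge of the constraint graph)
iff they conflict with the assignment, order, or machine constraint. -/
def conflict (a a' : P.Assignment) : Prop :=
  P.conflictA a a' ∨ P.conflictO a a' ∨ P.conflictO a' a ∨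
    P.conflictM a a' ∨ P.conflictM a' a

/-- A vertex of the constraint graph: an assignment using an allowed machine. -/
def isVertex (a : P.Assignment) : Prop := a.2.1 ∈ P.allowed a.1.1 a.1.2

end FJSP

/-- Correspondence between feasible schedules and independent sets of the constraint
graph: a bit string `x` encodes a feasible FJSP schedule iff (i) every marked index lies
in the vertex set `V` of the constraint graph, (ii) the marked indices form an
independent set (no two marked indices are joined by an edge), and (iii) the Hamming
weight of `x` equals the total number of operations `k = |O|`. -/
theorem stmt10 (P : FJSP) {N : ℕ} (ι : P.Assignment ≃ Fin N) (x : Fin N → Bool) :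
    P.Feasible (P.decode ι x) ↔
      ((∀ i : Fin N, x i = true → P.isVertex (ι.symm i)) ∧
        (∀ i i' : Fin N, x i = true → x i' = true → ¬ P.conflict (ι.symm i) (ι.symm i')) ∧
        (Finset.univ.filter fun i : Fin N => x i = true).card = ∑ j : Fin P.nJ, P.p j) := by

  classical
  set S := P.decode ι x with hS
  have hmem : ∀ a : P.Assignment, a ∈ S ↔ x (ι a) = true := by
    intro a; simp [hS, FJSP.decode]
  have hcard_eq : (Finset.univ.filter fun i : Fin N => x i = true).card = S.card := by
    apply Finset.card_bij (fun i _ => ι.symm i)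
    · intro i hi
      rw [hmem]
      simp only [Finset.mem_filter, Finset.mem_univ, true_and] at hi
      simpa using hi
    · intro i _ i' _ h; exact ι.symm.injective h
    · intro a ha
      refine ⟨ι a, ?_, by simp⟩
      simp only [Finset.mem_filter, Finset.mem_univ, true_and]
      exact (hmem a).1 ha
  have hOpcard : Fintype.card P.Op = ∑ j, P.p j := by
    simp [Fintype.card_sigma]
  constructor
  · rintro ⟨h1, h2, h3, h4⟩
    have hnc : ∀ a ∈ S, ∀ a' ∈ S, ¬ P.conflict a a' := by
      intro a ha a' ha' hc
      rcases hc with ⟨hne, heq⟩ | ⟨j,o,o',m,m',t,t',rfl,rfl,hlt,ht⟩ |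
        ⟨j,o,o',m,m',t,t',rfl,rfl,hlt,ht⟩ | ⟨hne, hmq, hle, hlt⟩ | ⟨hne, hmq, hle, hlt⟩
      · obtain ⟨mt, _, huniq⟩ := h1 a.1
        have e1 : a.2 = mt := huniq a.2 ha
        have e2 : a'.2 = mt := huniq a'.2 (by show ((a.1, a'.2.1, a'.2.2) : P.Assignment) ∈ S; rw [heq]; exact ha')
        exact hne (Prod.ext heq (e1.trans e2.symm))
      · exact absurd (h3 j o o' m m' t t' ha ha' hlt) (by omega)
      · exact absurd (h3 j o o' m m' t t' ha' ha hlt) (by omega)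
      · refine h4 a.1 a'.1 a.2.1 a.2.2 a'.2.2 ha ?_ hne ⟨hle, hlt⟩
        rw [show ((a'.1, a.2.1, a'.2.2) : P.Assignment) = a' from by rw [hmq]]
        exact ha'
      · refine h4 a'.1 a.1 a'.2.1 a'.2.2 a.2.2 ha' ?_ hne ⟨hle, hlt⟩
        rw [show ((a.1, a'.2.1, a.2.2) : P.Assignment) = a from by rw [hmq]]
        exact ha
    refine ⟨?_, ?_, ?_⟩
    · intro i hi
      exact h2 _ ((hmem _).2 (by simpa using hi))
    · intro i i' hi hi'
      exact hnc _ ((hmem _).2 (by simpa using hi)) _ ((hmem _).2 (by simpa using hi'))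
    · rw [hcard_eq, ← hOpcard]
      apply Finset.card_bij (fun a _ => a.1)
      · intro a _; exact Finset.mem_univ _
      · intro a ha a' ha' heq
        obtain ⟨mt, _, huniq⟩ := h1 a.1
        have e1 : a.2 = mt := huniq a.2 ha
        have e2 : a'.2 = mt := huniq a'.2 (by show ((a.1, a'.2.1, a'.2.2) : P.Assignment) ∈ S; rw [heq]; exact ha')
        exact Prod.ext heq (e1.trans e2.symm)
      · intro op _
        obtain ⟨mt, hmt, _⟩ := h1 op
        exact ⟨(op, mt), hmt, rfl⟩
  · rintro ⟨hv, hind, hcard⟩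
    have hnc : ∀ a ∈ S, ∀ a' ∈ S, ¬ P.conflict a a' := by
      intro a ha a' ha' hc
      have := hind (ι a) (ι a') ((hmem a).1 ha) ((hmem a').1 ha')
      simp only [Equiv.symm_apply_apply] at this
      exact this hc
    have hinj : Set.InjOn (fun a : P.Assignment => a.1) ↑S := by
      intro a ha a' ha' heq
      by_contra hne
      exact hnc a (by simpa using ha) a' (by simpa using ha') (Or.inl ⟨hne, heq⟩)
    have hScard : S.card = Fintype.card P.Op := by
      rw [← hcard_eq, hcard, hOpcard]
    have himg : S.image (fun a : P.Assignment => a.1) = Finset.univ := by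
      apply Finset.eq_univ_of_card
      rw [Finset.card_image_of_injOn hinj, hScard]
    refine ⟨?_, ?_, ?_, ?_⟩
    · intro op
      have : op ∈ S.image (fun a : P.Assignment => a.1) := himg ▸ Finset.mem_univ op
      obtain ⟨a, ha, hfst⟩ := Finset.mem_image.1 this
      refine ⟨a.2, ?_, ?_⟩
      · show ((op, a.2.1, a.2.2) : P.Assignment) ∈ S
        rw [← hfst]; exact ha
      · intro mt hmt
        have : ((op, mt) : P.Assignment) = a := hinj (by simpa using hmt) (by simpa using ha) (by rw [← hfst])
        rw [← this]
    · intro a ha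
      have := hv (ι a) ((hmem a).1 ha)
      rw [Equiv.symm_apply_apply] at this; exact this
    · intro j o o' m m' t t' ha ha' hlt
      by_contra hle
      push_neg at hle
      exact hnc _ ha _ ha' (Or.inr (Or.inl ⟨j, o, o', m, m', t, t', rfl, rfl, hlt, hle⟩))
    · intro op op' m t t' ha ha' hne hlt
      exact hnc _ ha _ ha' (Or.inr (Or.inr (Or.inr (Or.inl ⟨hne, rfl, hlt.1, hlt.2⟩))))
end
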